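/- For all integers m ≥ 1 and j ≥ 1, the 2-adic valuation of the generalized binomial coefficient C(2^{−m}, j) := (∏_{k=0}^{j−1} (2^{−m} − k))/j!, a nonzero rational number, equals S(j) − j − j·m. -/

import Mathlib

/-- `S ℓ` is the sum of the digits of `ℓ` in base 2. -/
def S (ℓ : ℕ) : ℕ := (Nat.digits 2 ℓ).sum

lemma factor_ne_zero (m k : ℕ) (hm : 1 ≤ m) :
    ((2 : ℚ) ^ (-(m : ℤ)) - (k : ℚ)) ≠ 0 := by
  have h1 : (2 : ℚ) ^ (-(m : ℤ)) = ((2 : ℚ) ^ m)⁻¹ := by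
    rw [zpow_neg, zpow_natCast]
  rcases Nat.eq_zero_or_pos k with hk | hk
  · subst hk
    simp [h1]
  · have h2 : (2 : ℚ) ^ (-(m : ℤ)) < 1 := by
      rw [h1]
      rw [inv_lt_one_iff₀]
      right
      exact one_lt_pow₀ (by norm_num) (by omega)
    have : (1 : ℚ) ≤ (k : ℚ) := by exact_mod_cast hk
    intro h
    rw [sub_eq_zero] at h
    linarith

lemma factor_val (m k : ℕ) (hm : 1 ≤ m) :
    padicValRat 2 ((2 : ℚ) ^ (-(m : ℤ)) - (k : ℚ)) = -(m : ℤ) := by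
  have h2m : ((2 : ℚ) ^ m) ≠ 0 := by positivity
  have heq : (2 : ℚ) ^ (-(m : ℤ)) - (k : ℚ)
      = (((1 - (k : ℤ) * 2 ^ m : ℤ) : ℚ)) * ((2 : ℚ) ^ m)⁻¹ := by
    push_cast
    rw [zpow_neg, zpow_natCast]
    field_simp
  have hodd : ¬ (2 : ℤ) ∣ (1 - (k : ℤ) * 2 ^ m) := by
    have hd : (2 : ℤ) ∣ ((k : ℤ) * 2 ^ m) :=
      Dvd.dvd.mul_left (dvd_pow_self 2 (by omega : m ≠ 0)) _
    intro h
    have h2 : (2 : ℤ) ∣ 1 := by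
      have := dvd_add h hd
      simpa using this
    norm_num at h2
  have hz : (1 - (k : ℤ) * 2 ^ m) ≠ 0 := by
    intro h; exact hodd (h ▸ dvd_zero 2)
  have hv1 : padicValRat 2 (((1 - (k : ℤ) * 2 ^ m : ℤ) : ℚ)) = 0 := by
    rw [padicValRat.of_int]
    unfold padicValInt
    rw [padicValNat.eq_zero_of_not_dvd]
    · simp
    · rw [← Int.natAbs_natCast 2, ← Int.natAbs_dvd_natAbs] at *
      simpa using hodd
  have hv2 : padicValRat 2 (((2 : ℚ) ^ m)⁻¹) = -(m : ℤ) := by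
    rw [padicValRat.inv, padicValRat.pow 2]
    have h22 : padicValRat 2 ((2 : ℚ)) = 1 := by
      have := padicValRat.self (p := 2) (by norm_num)
      simpa using this
    rw [h22]
    simp
  rw [heq, padicValRat.mul (by exact_mod_cast hz) (by positivity), hv1, hv2, zero_add]

lemma prod_val (m j : ℕ) (hm : 1 ≤ m) :
    (∏ k ∈ Finset.range j, ((2 : ℚ) ^ (-(m : ℤ)) - (k : ℚ))) ≠ 0 ∧
    padicValRat 2 (∏ k ∈ Finset.range j, ((2 : ℚ) ^ (-(m : ℤ)) - (k : ℚ)))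
      = -((j : ℤ) * m) := by
  induction j with
  | zero => simp [padicValRat.one]
  | succ n ih =>
    obtain ⟨h1, h2⟩ := ih
    rw [Finset.prod_range_succ]
    constructor
    · exact mul_ne_zero h1 (factor_ne_zero m n hm)
    · rw [padicValRat.mul h1 (factor_ne_zero m n hm), h2, factor_val m n hm]
      push_cast
      ring

theorem stmt_14 (m j : ℕ) (hm : 1 ≤ m) (hj : 1 ≤ j) :
    (∏ k ∈ Finset.range j, ((2 : ℚ) ^ (-(m : ℤ)) - (k : ℚ))) / (j.factorial : ℚ) ≠ 0 ∧
    padicValRat 2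
        ((∏ k ∈ Finset.range j, ((2 : ℚ) ^ (-(m : ℤ)) - (k : ℚ))) / (j.factorial : ℚ)) =
      (S j : ℤ) - (j : ℤ) - (j : ℤ) * (m : ℤ) := by
  obtain ⟨h1, h2⟩ := prod_val m j hm
  have hfac : (j.factorial : ℚ) ≠ 0 := by
    exact_mod_cast j.factorial_ne_zero
  have hSle : S j ≤ j := Nat.digit_sum_le 2 j
  have hleg : padicValNat 2 j.factorial = j - S j := by
    have := sub_one_mul_padicValNat_factorial (p := 2) j
    simpa [S] using this
  have hvfac : padicValRat 2 (j.factorial : ℚ) = (j : ℤ) - (S j : ℤ) := by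
    rw [padicValRat.of_nat, hleg]
    omega
  constructor
  · exact div_ne_zero h1 hfac
  · rw [padicValRat.div h1 hfac, h2, hvfac]
    ring
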